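/- Let 0 < ε < M_1 and 2ε ≤ M_2, let F_0 be a distribution function with F_0(0) = 0, F_0(M_1) = 1 and a strictly positive continuous density f_0 on (0, M_1), and let F_E be a probability distribution concentrated on [ε, M_2] with a strictly positive continuous density on (ε, M_2). For a sub-distribution function G (a nondecreasing right-continuous function with 0 ≤ G ≤ 1 and G(x) = 0 for x < 0), set Φ(G) = ∫ e^{-1} ∫_0^{M_1 + M_2} ( F_0(s) − F_0(s − e) )² / ( G(s) − G(s − e) ) ds dF_E(e), with the conventions 0/0 = 0 and a/0 = ∞ for a > 0. Then Φ(G) ≥ 1 for every sub-distribution function G, Φ(F_0) = 1, and if Φ(G) ≤ 1 then G(t) = F_0(t) for all t ∈ [0, M_1]. -/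

import Mathlib

open MeasureTheory Filter Set ENNReal

section IncubationAux

/-- If `g ≤ f` a.e. and `∫f ≤ ∫g < ∞` then `f = g` a.e. -/
lemma incub_aeEq_of_lintegral_le {α} {m : MeasurableSpace α} {μ : Measure α} {f g : α → ℝ≥0∞}
    (hf : Measurable f) (hg : Measurable g) (hle : ∀ᵐ x ∂μ, g x ≤ f x)
    (hint : ∫⁻ x, f x ∂μ ≤ ∫⁻ x, g x ∂μ) (hfin : ∫⁻ x, g x ∂μ ≠ ∞) :
    f =ᵐ[μ] g := by
  have hsub : ∫⁻ x, f x - g x ∂μ = ∫⁻ x, f x ∂μ - ∫⁻ x, g x ∂μ :=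
    lintegral_sub hg hfin hle
  have h0 : ∫⁻ x, f x - g x ∂μ = 0 := by
    rw [hsub]; exact tsub_eq_zero_of_le hint
  have := (lintegral_eq_zero_iff (hf.sub hg)).1 h0
  have hgfin : ∀ᵐ x ∂μ, g x ≠ ∞ := ae_lt_top hg hfin |>.mono fun x hx => hx.ne
  filter_upwards [this, hle, hgfin] with x h1 h2 h3
  exact le_antisymm (tsub_eq_zero_iff_le.1 h1) h2

lemma incub_lintegral_shift (f : ℝ → ℝ≥0∞) (e a b : ℝ) :
    ∫⁻ s in Ioc a b, f (s - e) = ∫⁻ s in Ioc (a - e) (b - e), f s := by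
  have h1 : ∫⁻ s in Ioc a b, f (s - e) = ∫⁻ s, (Ioc (a-e) (b-e)).indicator f (s - e) := by
    rw [← lintegral_indicator measurableSet_Ioc]
    congr 1
    ext s
    by_cases hs : s ∈ Ioc a b
    · have hs' : s - e ∈ Ioc (a-e) (b-e) := by
        simp only [mem_Ioc] at hs ⊢; constructor <;> linarith [hs.1, hs.2]
      rw [indicator_of_mem hs, indicator_of_mem hs']
    · have hs' : s - e ∉ Ioc (a-e) (b-e) := by
        simp only [mem_Ioc] at hs ⊢
        intro h1c; by_contra; exact hs ⟨by linarith [h1c.1], by linarith⟩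
      rw [indicator_of_notMem hs, indicator_of_notMem hs']
  rw [h1, lintegral_sub_right_eq_self ((Ioc (a-e) (b-e)).indicator f) e,
    lintegral_indicator measurableSet_Ioc]

lemma incub_shift_diff_lintegral (g : ℝ → ℝ≥0∞) (hmeas : Measurable g)
    (hmono : Monotone g) (h0 : ∀ x < (0:ℝ), g x = 0) (h1 : ∀ x, g x ≤ 1)
    (e T : ℝ) (he : 0 < e) (heT : e ≤ T) :
    ∫⁻ s in Ioc 0 T, (g s - g (s - e)) = ∫⁻ s in Ioc (T - e) T, g s := by
  have hmeas' : Measurable fun s : ℝ => g (s - e) := hmeas.comp (measurable_id.sub_const e)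
  have hfin2 : ∫⁻ s in Ioc (0:ℝ) T, g (s - e) ≠ ∞ := by
    refine ne_top_of_le_ne_top ?_ (lintegral_mono fun s => h1 (s - e))
    simp [lintegral_const, Real.volume_Ioc]
  have hle : ∀ᵐ s ∂(volume.restrict (Ioc (0:ℝ) T)), g (s - e) ≤ g s :=
    Filter.Eventually.of_forall fun s => hmono (by linarith)
  rw [lintegral_sub hmeas' hfin2 hle, incub_lintegral_shift g e 0 T]
  have hz : ∫⁻ s in Ioc (0 - e) (0:ℝ), g s = 0 := by
    rw [← restrict_Ioo_eq_restrict_Ioc,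
      setLIntegral_congr_fun measurableSet_Ioo
        (fun s hs => h0 s hs.2)]
    simp
  have key1 : ∫⁻ s in Ioc (0:ℝ) T, g s
      = (∫⁻ s in Ioc (0:ℝ) (T - e), g s) + ∫⁻ s in Ioc (T - e) T, g s := by
    rw [← Set.Ioc_union_Ioc_eq_Ioc (show (0:ℝ) ≤ T - e by linarith) (show T - e ≤ T by linarith)]
    exact lintegral_union measurableSet_Ioc (Set.Ioc_disjoint_Ioc_of_le le_rfl)
  have key2 : ∫⁻ s in Ioc (0 - e) (T - e), g s = ∫⁻ s in Ioc (0:ℝ) (T - e), g s := by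
    rw [← Set.Ioc_union_Ioc_eq_Ioc (show (0:ℝ) - e ≤ 0 by linarith) (show (0:ℝ) ≤ T - e by linarith),
      lintegral_union measurableSet_Ioc (Set.Ioc_disjoint_Ioc_of_le le_rfl), hz, zero_add]
  have hfinpart : ∫⁻ s in Ioc (0:ℝ) (T - e), g s ≠ ∞ := by
    refine ne_top_of_le_ne_top ?_ (lintegral_mono fun s => h1 s)
    simp [lintegral_const, Real.volume_Ioc]
  rw [key1, key2]
  exact ENNReal.add_sub_cancel_left hfinpart

lemma incub_pointwise_amgm {a b : ℝ} (ha : 0 ≤ a) (hb : 0 ≤ b) :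
    ENNReal.ofReal (2*a) ≤ ENNReal.ofReal (a^2) / ENNReal.ofReal b + ENNReal.ofReal b := by
  rcases eq_or_lt_of_le hb with hb0 | hb0
  · rcases eq_or_lt_of_le ha with ha0 | ha0
    · simp [← ha0, ← hb0]
    · have : ENNReal.ofReal (a^2) / ENNReal.ofReal b = ∞ := by
        rw [← hb0]
        simp [ENNReal.div_zero (by positivity : ENNReal.ofReal (a^2) ≠ 0)]
      simp [this]
  · rw [← ENNReal.ofReal_div_of_pos hb0, ← ENNReal.ofReal_add (by positivity) hb]
    apply ENNReal.ofReal_le_ofReal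
    have h := sq_nonneg (a - b)
    rw [div_add' _ _ _ hb0.ne', le_div_iff₀ hb0]
    nlinarith

lemma incub_pointwise_amgm_eq {a b : ℝ} (ha : 0 ≤ a) (hb : 0 ≤ b)
    (h : ENNReal.ofReal (a^2) / ENNReal.ofReal b + ENNReal.ofReal b = ENNReal.ofReal (2*a)) :
    a = b := by
  rcases eq_or_lt_of_le hb with hb0 | hb0
  · rcases eq_or_lt_of_le ha with ha0 | ha0
    · rw [← ha0, ← hb0]
    · exfalso
      have : ENNReal.ofReal (a^2) / ENNReal.ofReal b = ∞ := by
        rw [← hb0]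
        simp [ENNReal.div_zero (by positivity : ENNReal.ofReal (a^2) ≠ 0)]
      rw [this] at h
      simp at h
      exact (ENNReal.mul_ne_top (by norm_num) ofReal_ne_top) h.symm
  · rw [← ENNReal.ofReal_div_of_pos hb0, ← ENNReal.ofReal_add (by positivity) hb] at h
    have h' : a^2 / b + b = 2*a := by
      have := (ENNReal.ofReal_eq_ofReal_iff (by positivity) (by positivity)).1 h
      linarith [this]
    have hq : (a - b)^2 = 0 := by
      field_simp at h'
      nlinarith
    have := pow_eq_zero_iff (n := 2) (by norm_num) |>.1 hq
    linarith

lemma incub_div_self_sq {a : ℝ} (ha : 0 ≤ a) :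
    ENNReal.ofReal (a^2) / ENNReal.ofReal a = ENNReal.ofReal a := by
  rcases eq_or_lt_of_le ha with ha0 | ha0
  · simp [← ha0]
  · rw [sq, ENNReal.ofReal_mul ha, mul_comm, mul_div_assoc,
      ENNReal.div_self (by positivity) ofReal_ne_top, mul_one]

section MonoLemmas
variable {g : ℝ → ℝ} (hmono : Monotone g) (hm : Measurable g)
  (h0 : ∀ x < (0:ℝ), g x = 0) (h1 : ∀ x, g x ≤ 1) {e T : ℝ} (he : 0 < e) (heT : e ≤ T)

include hmono h0 in
lemma incub_nonneg_of_mono : ∀ x, 0 ≤ g x := by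
  intro x
  rcases lt_or_ge x 0 with h | h
  · exact (h0 x h).ge
  · rw [← h0 (-1) (by norm_num)]
    exact hmono (by linarith)

include hmono hm h0 h1 he heT in
lemma incub_diff_lintegral_eq : ∫⁻ s in Ioc 0 T, ENNReal.ofReal (g s - g (s - e))
    = ∫⁻ s in Ioc (T - e) T, ENNReal.ofReal (g s) := by
  have hnn := incub_nonneg_of_mono hmono h0
  have : ∀ s : ℝ, ENNReal.ofReal (g s - g (s - e))
      = ENNReal.ofReal (g s) - ENNReal.ofReal (g (s - e)) :=
    fun s => ENNReal.ofReal_sub _ (hnn _)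
  simp_rw [this]
  exact incub_shift_diff_lintegral (fun s => ENNReal.ofReal (g s))
    (ENNReal.measurable_ofReal.comp hm)
    (fun a b hab => ENNReal.ofReal_le_ofReal (hmono hab))
    (fun x hx => by simp [h0 x hx])
    (fun x => by simpa using ENNReal.ofReal_le_ofReal (h1 x)) e T he heT

include hmono hm h0 h1 he heT in
lemma incub_diff_lintegral_le : ∫⁻ s in Ioc 0 T, ENNReal.ofReal (g s - g (s - e))
    ≤ ENNReal.ofReal e := by
  rw [incub_diff_lintegral_eq hmono hm h0 h1 he heT]
  calc ∫⁻ s in Ioc (T - e) T, ENNReal.ofReal (g s)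
      ≤ ∫⁻ _ in Ioc (T - e) T, 1 := lintegral_mono fun s => by
        simpa using ENNReal.ofReal_le_ofReal (h1 s)
    _ = ENNReal.ofReal e := by simp [Real.volume_Ioc]

include hmono hm h0 h1 he heT in
lemma incub_diff_lintegral_exact (hone : ∀ x, T - e ≤ x → g x = 1) :
    ∫⁻ s in Ioc 0 T, ENNReal.ofReal (g s - g (s - e)) = ENNReal.ofReal e := by
  rw [incub_diff_lintegral_eq hmono hm h0 h1 he heT]
  rw [setLIntegral_congr_fun measurableSet_Ioc
    (fun s hs => by rw [hone s hs.1.le]; simp :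
        ∀ s ∈ Ioc (T-e) T, ENNReal.ofReal (g s) = 1)]
  simp [Real.volume_Ioc]

end MonoLemmas

section Inner
variable {F G : ℝ → ℝ} (hFmono : Monotone F) (hFm : Measurable F)
  (hF0 : ∀ x < (0:ℝ), F x = 0) (hF1 : ∀ x, F x ≤ 1)
  (hGmono : Monotone G) (hGm : Measurable G)
  (hG0 : ∀ x < (0:ℝ), G x = 0) (hG1 : ∀ x, G x ≤ 1)
  {e T : ℝ} (he : 0 < e) (heT : e ≤ T)
  (hFone : ∀ x, T - e ≤ x → F x = 1)

include hFmono hFm hF0 hF1 hGmono hGm hG0 hG1 he heT hFone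

lemma incub_inner_ge :
    ENNReal.ofReal e ≤ ∫⁻ s in Ioc 0 T,
      ENNReal.ofReal ((F s - F (s - e))^2) / ENNReal.ofReal (G s - G (s - e)) := by
  set X : ℝ → ℝ≥0∞ := fun s =>
    ENNReal.ofReal ((F s - F (s - e))^2) / ENNReal.ofReal (G s - G (s - e)) with hX
  set A : ℝ → ℝ≥0∞ := fun s => ENNReal.ofReal (F s - F (s - e)) with hA
  set B : ℝ → ℝ≥0∞ := fun s => ENNReal.ofReal (G s - G (s - e)) with hB
  have hBm : Measurable B := ENNReal.measurable_ofReal.comp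
    (hGm.sub (hGm.comp (measurable_id.sub_const e)))
  have hpt : ∀ s, 2 * A s ≤ X s + B s := by
    intro s
    have h2 : ENNReal.ofReal (2 * (F s - F (s - e))) = 2 * A s := by
      rw [ENNReal.ofReal_mul (by norm_num)]
      norm_num; rfl
    rw [← h2]
    exact incub_pointwise_amgm (sub_nonneg.2 (hFmono (by linarith)))
      (sub_nonneg.2 (hGmono (by linarith)))
  have hXB : (∫⁻ s in Ioc (0:ℝ) T, X s) + (∫⁻ s in Ioc (0:ℝ) T, B s)
      = ∫⁻ s in Ioc (0:ℝ) T, (X s + B s) := (lintegral_add_right' _ hBm.aemeasurable).symm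
  have hA2 : ∫⁻ s in Ioc (0:ℝ) T, 2 * A s = 2 * ENNReal.ofReal e := by
    rw [lintegral_const_mul' _ _ (by norm_num),
      incub_diff_lintegral_exact hFmono hFm hF0 hF1 he heT hFone]
  have hmain : 2 * ENNReal.ofReal e ≤ (∫⁻ s in Ioc (0:ℝ) T, X s) + ∫⁻ s in Ioc (0:ℝ) T, B s := by
    rw [hXB, ← hA2]
    exact lintegral_mono fun s => hpt s
  have hBle : ∫⁻ s in Ioc (0:ℝ) T, B s ≤ ENNReal.ofReal e :=
    incub_diff_lintegral_le hGmono hGm hG0 hG1 he heT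
  have := hmain.trans (add_le_add_right hBle _)
  rw [two_mul] at this
  exact (ENNReal.add_le_add_iff_right ofReal_ne_top).1 this

lemma incub_inner_eq_case
    (heq : (∫⁻ s in Ioc 0 T,
      ENNReal.ofReal ((F s - F (s - e))^2) / ENNReal.ofReal (G s - G (s - e)))
        ≤ ENNReal.ofReal e) :
    ∀ᵐ s ∂(volume.restrict (Ioc (0:ℝ) T)), G s - G (s - e) = F s - F (s - e) := by
  set X : ℝ → ℝ≥0∞ := fun s =>
    ENNReal.ofReal ((F s - F (s - e))^2) / ENNReal.ofReal (G s - G (s - e)) with hX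
  set A : ℝ → ℝ≥0∞ := fun s => ENNReal.ofReal (F s - F (s - e)) with hA
  set B : ℝ → ℝ≥0∞ := fun s => ENNReal.ofReal (G s - G (s - e)) with hB
  have hBm : Measurable B := ENNReal.measurable_ofReal.comp
    (hGm.sub (hGm.comp (measurable_id.sub_const e)))
  have hXm : Measurable X := by
    apply Measurable.div _ hBm
    exact ENNReal.measurable_ofReal.comp
      ((hFm.sub (hFm.comp (measurable_id.sub_const e))).pow_const 2)
  have hAm : Measurable A := ENNReal.measurable_ofReal.comp
    (hFm.sub (hFm.comp (measurable_id.sub_const e)))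
  have hpt : ∀ s, 2 * A s ≤ X s + B s := by
    intro s
    have h2 : ENNReal.ofReal (2 * (F s - F (s - e))) = 2 * A s := by
      rw [ENNReal.ofReal_mul (by norm_num)]; norm_num; rfl
    rw [← h2]
    exact incub_pointwise_amgm (sub_nonneg.2 (hFmono (by linarith)))
      (sub_nonneg.2 (hGmono (by linarith)))
  have hA2 : ∫⁻ s in Ioc (0:ℝ) T, 2 * A s = 2 * ENNReal.ofReal e := by
    rw [lintegral_const_mul' _ _ (by norm_num),
      incub_diff_lintegral_exact hFmono hFm hF0 hF1 he heT hFone]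
  have hBle : ∫⁻ s in Ioc (0:ℝ) T, B s ≤ ENNReal.ofReal e :=
    incub_diff_lintegral_le hGmono hGm hG0 hG1 he heT
  have hXB : ∫⁻ s in Ioc (0:ℝ) T, (X s + B s) ≤ ∫⁻ s in Ioc (0:ℝ) T, 2 * A s := by
    rw [hA2, lintegral_add_right' _ hBm.aemeasurable]
    calc (∫⁻ s in Ioc (0:ℝ) T, X s) + ∫⁻ s in Ioc (0:ℝ) T, B s
        ≤ ENNReal.ofReal e + ENNReal.ofReal e := add_le_add heq hBle
      _ = 2 * ENNReal.ofReal e := (two_mul _).symm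
  have haeEq : (fun s => X s + B s) =ᵐ[volume.restrict (Ioc (0:ℝ) T)] (fun s => 2 * A s) := by
    apply incub_aeEq_of_lintegral_le (hXm.add hBm) (hAm.const_mul 2)
      (Filter.Eventually.of_forall hpt) hXB
    rw [hA2]
    exact ENNReal.mul_ne_top (by norm_num) ofReal_ne_top
  filter_upwards [haeEq] with s hs
  have h2 : ENNReal.ofReal (2 * (F s - F (s - e))) = 2 * A s := by
    rw [ENNReal.ofReal_mul (by norm_num)]; norm_num; rfl
  refine (incub_pointwise_amgm_eq (sub_nonneg.2 (hFmono (by linarith)))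
    (sub_nonneg.2 (hGmono (by linarith))) ?_).symm
  rw [h2, ← hs]

end Inner

lemma incub_ae_comp_sub (e : ℝ) {P : ℝ → Prop} (h : ∀ᵐ x, P x) : ∀ᵐ x, P (x - e) := by
  rw [Filter.eventually_iff, mem_ae_iff] at h ⊢
  have hpre : {x : ℝ | P (x - e)}ᶜ = (fun x => x - e) ⁻¹' {x | P x}ᶜ := rfl
  rw [hpre]
  rw [(measurePreserving_sub_right volume e).measure_preimage
    (NullMeasurableSet.of_null h)]
  exact h

lemma incub_ae_zero_of_shift (h : ℝ → ℝ) (e T : ℝ) (he : 0 < e)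
    (hneg : ∀ x < (0:ℝ), h x = 0)
    (hshift : ∀ᵐ s, s ∈ Ioc (0:ℝ) T → h s = h (s - e)) :
    ∀ᵐ s, s ∈ Ioc (0:ℝ) T → h s = 0 := by
  have key : ∀ n : ℕ, ∀ᵐ s, s ∈ Ioc (0:ℝ) T → s ≤ n * e → h s = 0 := by
    intro n
    induction n with
    | zero =>
      filter_upwards with s hs hle
      exfalso
      simp at hle
      linarith [hs.1]
    | succ n ih =>
      have ih' : ∀ᵐ s : ℝ, (s - e ∈ Ioc (0:ℝ) T → s - e ≤ n * e → h (s - e) = 0) :=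
        incub_ae_comp_sub e ih
      have hne : ∀ᵐ s : ℝ, s ≠ e := by
        rw [Filter.eventually_iff, mem_ae_iff]
        simpa using Real.volume_singleton (a := e)
      filter_upwards [hshift, ih', hne] with s h1 h2 h3 hs hle
      rw [h1 hs]
      rcases lt_trichotomy (s - e) 0 with hc | hc | hc
      · exact hneg _ hc
      · exact absurd (by linarith : s = e) h3
      · apply h2 ⟨hc, by linarith [hs.2]⟩
        push_cast at hle ⊢
        linarith
  obtain ⟨n, hn⟩ := exists_nat_ge (T / e)
  have hnT : T ≤ n * e := by
    rw [div_le_iff₀ he] at hn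
    linarith
  filter_upwards [key n] with s hs h1
  exact hs h1 (by linarith [h1.2])

section F0Facts
variable {M₁ : ℝ} {F0 f0 : ℝ → ℝ}
  (hF0 : ∀ x, F0 x = ∫ y in Set.Iic x, f0 y)
  (hf0pos : ∀ x ∈ Set.Ioo 0 M₁, 0 < f0 x)
  (hf0supp : ∀ x, x ∉ Set.Ioo 0 M₁ → f0 x = 0)
  (hF00 : F0 0 = 0) (hF0M₁ : F0 M₁ = 1)

include hf0pos hf0supp in
lemma incub_f0_nonneg : ∀ x, 0 ≤ f0 x := by
  intro x
  by_cases hx : x ∈ Set.Ioo 0 M₁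
  · exact (hf0pos x hx).le
  · rw [hf0supp x hx]

include hF0 hf0supp hF0M₁ in
lemma incub_f0_integrable : Integrable f0 := by
  have hIic : IntegrableOn f0 (Iic M₁) := by
    by_contra hni
    rw [hF0 M₁, integral_undef hni] at hF0M₁
    norm_num at hF0M₁
  have hIoi : IntegrableOn f0 (Ioi M₁) := by
    have : EqOn f0 0 (Ioi M₁) := fun x hx =>
      hf0supp x fun hmem => absurd hmem.2 (not_lt.2 (le_of_lt hx))
    exact (integrableOn_congr_fun this measurableSet_Ioi).2 integrableOn_zero
  have := hIic.union hIoi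
  rwa [Iic_union_Ioi, integrableOn_univ] at this

include hF0 hf0pos hf0supp hF0M₁ in
lemma incub_F0_mono : Monotone F0 := by
  intro x y hxy
  rw [hF0 x, hF0 y, ← Set.Iic_union_Ioc_eq_Iic hxy,
    setIntegral_union (Set.Iic_disjoint_Ioc le_rfl) measurableSet_Ioc
      ((incub_f0_integrable hF0 hf0supp hF0M₁).integrableOn)
      ((incub_f0_integrable hF0 hf0supp hF0M₁).integrableOn)]
  have : 0 ≤ ∫ s in Ioc x y, f0 s :=
    setIntegral_nonneg measurableSet_Ioc fun s _ => incub_f0_nonneg hf0pos hf0supp s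
  linarith

include hF0 hf0supp in
lemma incub_F0_zero : ∀ x ≤ (0:ℝ), F0 x = 0 := by
  intro x hx
  rw [hF0 x]
  apply setIntegral_eq_zero_of_forall_eq_zero
  intro y hy
  exact hf0supp y fun hmem => absurd hmem.1 (not_lt.2 ((mem_Iic.1 hy).trans hx))

include hF0 hf0pos hf0supp hF0M₁ in
lemma incub_F0_one : ∀ x, M₁ ≤ x → F0 x = 1 := by
  intro x hx
  have hint := incub_f0_integrable hF0 hf0supp hF0M₁
  rw [hF0 x, ← Set.Iic_union_Ioc_eq_Iic hx,
    setIntegral_union (Set.Iic_disjoint_Ioc le_rfl) measurableSet_Ioc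
      hint.integrableOn hint.integrableOn]
  have h2 : ∫ s in Ioc M₁ x, f0 s = 0 := by
    apply setIntegral_eq_zero_of_forall_eq_zero
    intro y hy
    exact hf0supp y fun hmem => absurd hmem.2 (not_lt.2 hy.1.le)
  rw [h2, ← hF0 M₁, hF0M₁, add_zero]

include hF0 hf0pos hf0supp hF0M₁ in
lemma incub_F0_le_one : ∀ x, F0 x ≤ 1 := by
  intro x
  rcases le_or_gt x M₁ with h | h
  · rw [← hF0M₁]; exact incub_F0_mono hF0 hf0pos hf0supp hF0M₁ h
  · rw [incub_F0_one hF0 hf0pos hf0supp hF0M₁ x h.le]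

include hF0 hf0pos hf0supp hF00 hF0M₁ in
lemma incub_F0_contOn (T : ℝ) : ContinuousOn F0 (Icc 0 T) := by
  have hint := incub_f0_integrable hF0 hf0supp hF0M₁
  have : ∀ x ∈ Icc (0:ℝ) T, F0 x = ∫ s in Ioc 0 x, f0 s := by
    intro x hx
    rw [hF0 x, ← Set.Iic_union_Ioc_eq_Iic hx.1,
      setIntegral_union (Set.Iic_disjoint_Ioc le_rfl) measurableSet_Ioc
        hint.integrableOn hint.integrableOn, ← hF0 0, hF00, zero_add]
  rw [continuousOn_congr this]
  exact intervalIntegral.continuousOn_primitive hint.integrableOn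

end F0Facts

end IncubationAux

/-- Key minimization step in the consistency proof for the incubation time model:
the criterion `Φ(G) = ∫ e⁻¹ ∫_0^{M₁+M₂} (F0(s) − F0(s−e))² / (G(s) − G(s−e)) ds dF_E(e)`
(with conventions `0/0 = 0`, `a/0 = ∞` for `a > 0`, realized by `ℝ≥0∞`-division)
satisfies `Φ(G) ≥ 1` for every sub-distribution function `G`, `Φ(F0) = 1`, and any
sub-distribution function `G` with `Φ(G) ≤ 1` coincides with `F0` on `[0, M₁]`. -/
theorem incubation_consistency_criterion
    (ε M₁ M₂ : ℝ) (hε : 0 < ε) (hεM₁ : ε < M₁) (hM₂ : 2 * ε ≤ M₂)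
    (F0 f0 : ℝ → ℝ)
    (hF0 : ∀ x, F0 x = ∫ y in Set.Iic x, f0 y)
    (hf0pos : ∀ x ∈ Set.Ioo 0 M₁, 0 < f0 x)
    (hf0cont : ContinuousOn f0 (Set.Ioo 0 M₁))
    (hf0supp : ∀ x, x ∉ Set.Ioo 0 M₁ → f0 x = 0)
    (hF00 : F0 0 = 0) (hF0M₁ : F0 M₁ = 1)
    (fE : ℝ → ℝ)
    (hfEpos : ∀ x ∈ Set.Ioo ε M₂, 0 < fE x)
    (hfEcont : ContinuousOn fE (Set.Ioo ε M₂))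
    (hfEsupp : ∀ x, x ∉ Set.Icc ε M₂ → fE x = 0)
    (ν : Measure ℝ) (hν : ν = volume.withDensity fun e => ENNReal.ofReal (fE e))
    (hνprob : ν Set.univ = 1)
    (Φ : (ℝ → ℝ) → ℝ≥0∞)
    (hΦ : ∀ G : ℝ → ℝ, Φ G = ∫⁻ e, ENNReal.ofReal e⁻¹ *
        (∫⁻ s in Set.Ioc (0 : ℝ) (M₁ + M₂),
          ENNReal.ofReal ((F0 s - F0 (s - e)) ^ 2) / ENNReal.ofReal (G s - G (s - e))) ∂ν) :
    (∀ G : ℝ → ℝ, Monotone G → (∀ x, G x ∈ Set.Icc (0 : ℝ) 1) →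
        (∀ x < (0 : ℝ), G x = 0) → (∀ x, ContinuousWithinAt G (Set.Ici x) x) →
        1 ≤ Φ G) ∧
    Φ F0 = 1 ∧
    (∀ G : ℝ → ℝ, Monotone G → (∀ x, G x ∈ Set.Icc (0 : ℝ) 1) →
        (∀ x < (0 : ℝ), G x = 0) → (∀ x, ContinuousWithinAt G (Set.Ici x) x) →
        Φ G ≤ 1 → ∀ t ∈ Set.Icc (0 : ℝ) M₁, G t = F0 t) := by
  have hM₂0 : 0 < M₂ := lt_of_lt_of_le (by linarith) hM₂
  have hM₁pos : 0 < M₁ := hε.trans hεM₁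
  set T := M₁ + M₂ with hT
  have hM₁T : M₁ ≤ T := by simp [hT]; positivity
  -- F0 facts
  have hF0mono := incub_F0_mono hF0 hf0pos hf0supp hF0M₁
  have hF0meas : Measurable F0 := hF0mono.measurable
  have hF0zero : ∀ x < (0:ℝ), F0 x = 0 := fun x hx => incub_F0_zero hF0 hf0supp x hx.le
  have hF0le1 := incub_F0_le_one hF0 hf0pos hf0supp hF0M₁
  have hF0one : ∀ e, e ≤ M₂ → ∀ x, T - e ≤ x → F0 x = 1 := fun e he x hx =>
    incub_F0_one hF0 hf0pos hf0supp hF0M₁ x (by simp only [hT] at hx; linarith)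
  -- ν support
  have hcompl : ν (Set.Icc ε M₂)ᶜ = 0 := by
    rw [hν, withDensity_apply _ measurableSet_Icc.compl,
      setLIntegral_congr_fun measurableSet_Icc.compl
        (fun e he => by rw [hfEsupp e he])]
    simp
  have hνae : ∀ᵐ e ∂ν, e ∈ Set.Icc ε M₂ := by
    rw [Filter.eventually_iff, mem_ae_iff]
    exact hcompl
  have hinner_ge : ∀ (G : ℝ → ℝ), Monotone G → Measurable G → (∀ x < (0:ℝ), G x = 0) →
      (∀ x, G x ≤ 1) → ∀ e ∈ Set.Icc ε M₂,
      ENNReal.ofReal e ≤ ∫⁻ s in Set.Ioc (0:ℝ) T,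
        ENNReal.ofReal ((F0 s - F0 (s - e)) ^ 2) / ENNReal.ofReal (G s - G (s - e)) := by
    intro G hGmono hGm hG0 hG1 e he
    exact incub_inner_ge hF0mono hF0meas hF0zero hF0le1 hGmono hGm hG0 hG1
      (lt_of_lt_of_le hε he.1) (by simp only [hT]; linarith [he.2]) (hF0one e he.2)
  have part1 : ∀ G : ℝ → ℝ, Monotone G → (∀ x, G x ∈ Set.Icc (0 : ℝ) 1) →
      (∀ x < (0 : ℝ), G x = 0) → (∀ x, ContinuousWithinAt G (Set.Ici x) x) →
      1 ≤ Φ G := by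
    intro G hGmono hGicc hG0 _
    have hGm := hGmono.measurable
    have hG1 : ∀ x, G x ≤ 1 := fun x => (hGicc x).2
    rw [hΦ G]
    have h1 : ∀ᵐ e ∂ν, 1 ≤ ENNReal.ofReal e⁻¹ *
        (∫⁻ s in Set.Ioc (0:ℝ) (M₁ + M₂),
          ENNReal.ofReal ((F0 s - F0 (s - e)) ^ 2) / ENNReal.ofReal (G s - G (s - e))) := by
      filter_upwards [hνae] with e he
      have hepos : 0 < e := lt_of_lt_of_le hε he.1
      have hge := hinner_ge G hGmono hGm hG0 hG1 e he
      calc (1:ℝ≥0∞) = ENNReal.ofReal e⁻¹ * ENNReal.ofReal e := by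
            rw [← ENNReal.ofReal_mul (by positivity), inv_mul_cancel₀ hepos.ne',
              ENNReal.ofReal_one]
        _ ≤ _ := mul_le_mul_right hge _
    calc (1:ℝ≥0∞) = ∫⁻ _, 1 ∂ν := by rw [lintegral_one, hνprob]
      _ ≤ _ := lintegral_mono_ae h1
  have part2 : Φ F0 = 1 := by
    rw [hΦ F0]
    have h1 : ∀ᵐ e ∂ν, ENNReal.ofReal e⁻¹ *
        (∫⁻ s in Set.Ioc (0:ℝ) (M₁ + M₂),
          ENNReal.ofReal ((F0 s - F0 (s - e)) ^ 2) / ENNReal.ofReal (F0 s - F0 (s - e)))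
        = 1 := by
      filter_upwards [hνae] with e he
      have hepos : 0 < e := lt_of_lt_of_le hε he.1
      have hinner : ∫⁻ s in Set.Ioc (0:ℝ) (M₁ + M₂),
          ENNReal.ofReal ((F0 s - F0 (s - e)) ^ 2) / ENNReal.ofReal (F0 s - F0 (s - e))
          = ENNReal.ofReal e := by
        have hpt : ∀ s : ℝ, ENNReal.ofReal ((F0 s - F0 (s - e)) ^ 2) /
            ENNReal.ofReal (F0 s - F0 (s - e)) = ENNReal.ofReal (F0 s - F0 (s - e)) :=
          fun s => incub_div_self_sq (sub_nonneg.2 (hF0mono (by linarith)))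
        simp_rw [hpt]
        exact incub_diff_lintegral_exact hF0mono hF0meas hF0zero hF0le1 hepos
          (by linarith [he.2]) (hF0one e he.2)
      rw [hinner, ← ENNReal.ofReal_mul (by positivity), inv_mul_cancel₀ hepos.ne',
        ENNReal.ofReal_one]
    rw [lintegral_congr_ae h1, lintegral_one, hνprob]
  refine ⟨part1, part2, ?_⟩
  intro G hGmono hGicc hG0 hGrc hΦle t ht
  have hGm := hGmono.measurable
  have hG1 : ∀ x, G x ≤ 1 := fun x => (hGicc x).2
  set I : ℝ → ℝ≥0∞ := fun e => ENNReal.ofReal e⁻¹ *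
    (∫⁻ s in Set.Ioc (0:ℝ) (M₁ + M₂),
      ENNReal.ofReal ((F0 s - F0 (s - e)) ^ 2) / ENNReal.ofReal (G s - G (s - e))) with hIdef
  have hIm : Measurable I := by
    apply Measurable.mul (ENNReal.measurable_ofReal.comp measurable_inv)
    have hjoint : Measurable fun p : ℝ × ℝ =>
        ENNReal.ofReal ((F0 p.2 - F0 (p.2 - p.1)) ^ 2) /
          ENNReal.ofReal (G p.2 - G (p.2 - p.1)) := by
      apply Measurable.div
      · exact ENNReal.measurable_ofReal.comp
          (((hF0meas.comp measurable_snd).sub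
            (hF0meas.comp (measurable_snd.sub measurable_fst))).pow_const 2)
      · exact ENNReal.measurable_ofReal.comp
          ((hGm.comp measurable_snd).sub (hGm.comp (measurable_snd.sub measurable_fst)))
    exact hjoint.lintegral_prod_right'
  have hge : ∀ᵐ e ∂ν, 1 ≤ I e := by
    filter_upwards [hνae] with e he
    have hepos : 0 < e := lt_of_lt_of_le hε he.1
    have hge := hinner_ge G hGmono hGm hG0 hG1 e he
    calc (1:ℝ≥0∞) = ENNReal.ofReal e⁻¹ * ENNReal.ofReal e := by
          rw [← ENNReal.ofReal_mul (by positivity), inv_mul_cancel₀ hepos.ne',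
            ENNReal.ofReal_one]
      _ ≤ _ := mul_le_mul_right hge _
  have hIeq : I =ᵐ[ν] fun _ => 1 := by
    apply incub_aeEq_of_lintegral_le hIm measurable_const hge
    · rw [lintegral_one, hνprob, ← hΦ G]
      exact hΦle
    · rw [lintegral_one, hνprob]
      exact one_ne_top
  have hpt0 : ∀ a : ℝ, ν {a} = 0 := by
    intro a
    rw [hν, withDensity_apply _ (measurableSet_singleton a)]
    exact setLIntegral_measure_zero _ _ Real.volume_singleton
  have hνIoo : ν (Set.Ioo ε M₂) ≠ 0 := by
    intro h0
    have hsub : Set.univ ⊆ Set.Ioo ε M₂ ∪ ({ε} ∪ ({M₂} ∪ (Set.Icc ε M₂)ᶜ)) := by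
      intro x _
      by_cases hx : x ∈ Set.Icc ε M₂
      · rcases eq_or_lt_of_le hx.1 with h | h
        · exact Or.inr (Or.inl h.symm)
        · rcases eq_or_lt_of_le hx.2 with h2 | h2
          · exact Or.inr (Or.inr (Or.inl h2))
          · exact Or.inl ⟨h, h2⟩
      · exact Or.inr (Or.inr (Or.inr hx))
    have hle2 : ν Set.univ ≤ ν (Set.Ioo ε M₂) + (ν {ε} + (ν {M₂} + ν (Set.Icc ε M₂)ᶜ)) :=
      le_trans (measure_mono hsub) (le_trans (measure_union_le _ _)
        (add_le_add_right (le_trans (measure_union_le _ _)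
          (add_le_add_right (measure_union_le _ _) _)) _))
    rw [hνprob, h0, hpt0, hpt0, hcompl] at hle2
    simp at hle2
  have hexists : ∃ e ∈ Set.Ioo ε M₂, I e = 1 := by
    by_contra hcon
    push_neg at hcon
    have hsub : Set.Ioo ε M₂ ⊆ {e | ¬ I e = (fun _ => (1:ℝ≥0∞)) e} := fun e he => hcon e he
    exact hνIoo (measure_mono_null hsub hIeq)
  obtain ⟨e, heIoo, heI⟩ := hexists
  have hepos : 0 < e := hε.trans heIoo.1
  have heM₂ : e ≤ M₂ := heIoo.2.le
  have heT : e ≤ T := by simp only [hT]; linarith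
  have hinner_le : (∫⁻ s in Set.Ioc (0:ℝ) (M₁ + M₂),
      ENNReal.ofReal ((F0 s - F0 (s - e)) ^ 2) / ENNReal.ofReal (G s - G (s - e)))
      ≤ ENNReal.ofReal e := by
    have h1 : ENNReal.ofReal e * ENNReal.ofReal e⁻¹ = 1 := by
      rw [← ENNReal.ofReal_mul hepos.le, mul_inv_cancel₀ hepos.ne', ENNReal.ofReal_one]
    have h2 : ENNReal.ofReal e⁻¹ * (∫⁻ s in Set.Ioc (0:ℝ) (M₁ + M₂),
        ENNReal.ofReal ((F0 s - F0 (s - e)) ^ 2) / ENNReal.ofReal (G s - G (s - e))) = 1 := heI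
    calc (∫⁻ s in Set.Ioc (0:ℝ) (M₁ + M₂),
        ENNReal.ofReal ((F0 s - F0 (s - e)) ^ 2) / ENNReal.ofReal (G s - G (s - e)))
        = (ENNReal.ofReal e * ENNReal.ofReal e⁻¹) * (∫⁻ s in Set.Ioc (0:ℝ) (M₁ + M₂),
          ENNReal.ofReal ((F0 s - F0 (s - e)) ^ 2) / ENNReal.ofReal (G s - G (s - e))) := by
          rw [h1, one_mul]
      _ = ENNReal.ofReal e * 1 := by rw [mul_assoc, h2]
      _ ≤ ENNReal.ofReal e := by rw [mul_one]
  have heq_ae := incub_inner_eq_case hF0mono hF0meas hF0zero hF0le1 hGmono hGm hG0 hG1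
    hepos heT (hF0one e heM₂) hinner_le
  have heq_ae' : ∀ᵐ s : ℝ, s ∈ Set.Ioc (0:ℝ) T →
      G s - G (s - e) = F0 s - F0 (s - e) :=
    (ae_restrict_iff' measurableSet_Ioc).1 heq_ae
  set h : ℝ → ℝ := fun s => G s - F0 s with hhdef
  have hshift : ∀ᵐ s : ℝ, s ∈ Set.Ioc (0:ℝ) T → h s = h (s - e) := by
    filter_upwards [heq_ae'] with s hs hmem
    have := hs hmem
    simp only [hhdef]
    linarith
  have hneg : ∀ x < (0:ℝ), h x = 0 := by
    intro x hx
    simp only [hhdef, hG0 x hx, hF0zero x hx, sub_zero]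
  have hfinal := incub_ae_zero_of_shift h e T hepos hneg hshift
  -- right-continuity argument
  have htT : t < T := by
    have := ht.2
    simp only [hT]
    linarith
  have htG : Filter.Tendsto G (nhdsWithin t (Set.Ioi t)) (nhds (G t)) :=
    (hGrc t).mono_left (nhdsWithin_mono t (Set.Ioi_subset_Ici le_rfl))
  have htF0 : Filter.Tendsto F0 (nhdsWithin t (Set.Ioi t)) (nhds (F0 t)) := by
    have hc : ContinuousWithinAt F0 (Set.Icc 0 T) t :=
      (incub_F0_contOn hF0 hf0pos hf0supp hF00 hF0M₁ T) t ⟨ht.1, by linarith [ht.2]⟩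
    have hmon := hc.mono_left (nhdsWithin_mono t
      (show Set.Ioc t T ⊆ Set.Icc 0 T from fun x hx => ⟨le_trans ht.1 hx.1.le, hx.2⟩))
    rwa [nhdsWithin_Ioc_eq_nhdsGT htT] at hmon
  have hfreq : ∃ᶠ s in nhdsWithin t (Set.Ioi t), G s = F0 s := by
    by_contra hcon
    rw [Filter.not_frequently] at hcon
    obtain ⟨c, hc, hsubc⟩ := mem_nhdsGT_iff_exists_Ioc_subset.1 hcon
    have hnull : volume {s : ℝ | ¬ (s ∈ Set.Ioc (0:ℝ) T → h s = 0)} = 0 :=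
      Filter.eventually_iff.1 hfinal
    set c' := min c T with hc'def
    have htc' : t < c' := lt_min hc htT
    have hsubset : Set.Ioc t c' ⊆ {s : ℝ | ¬ (s ∈ Set.Ioc (0:ℝ) T → h s = 0)} := by
      intro s hs
      simp only [Set.mem_setOf_eq]
      intro himp
      have hsIoc : s ∈ Set.Ioc (0:ℝ) T :=
        ⟨lt_of_le_of_lt ht.1 hs.1, hs.2.trans (min_le_right c T)⟩
      have hzero := himp hsIoc
      have hGF : ¬ G s = F0 s := hsubc ⟨hs.1, hs.2.trans (min_le_left c T)⟩
      apply hGF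
      simp only [hhdef] at hzero
      linarith
    have hle3 := measure_mono_null hsubset hnull
    rw [Real.volume_Ioc] at hle3
    have : (0:ℝ) < c' - t := by linarith
    simp [ENNReal.ofReal_eq_zero] at hle3
    linarith
  exact tendsto_nhds_unique_of_frequently_eq htG htF0 hfreq
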